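/- Let H be a complex Hilbert space and let P, Q be orthogonal projections on H (P² = P = P*, Q² = Q = Q*). Let C*(P,Q) denote the smallest closed star-subalgebra of the bounded operators on H containing the identity, P, and Q. Then there exists a unitary operator U ∈ C*(P,Q) with U P U* = Q and U Q U* = P if and only if the operator P + Q − I is invertible. -/

import Mathlib

open Filter Topology
open scoped InnerProductSpace NNReal

open scoped InnerProductSpace NNReal

lemma approx_ker {H : Type*} [NormedAddCommGroup H] [InnerProductSpace ℂ H] [CompleteSpace H]
    (T : H →L[ℂ] H) (hT : IsSelfAdjoint T) (hnu : ¬ IsUnit T) :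
    ∀ ε : ℝ, 0 < ε → ∃ x : H, ‖x‖ = 1 ∧ ‖T x‖ < ε := by
  by_contra hcon
  push_neg at hcon
  obtain ⟨ε, hε, hb'⟩ := hcon
  have hb : ∀ x : H, ε * ‖x‖ ≤ ‖T x‖ := by
    intro x
    rcases eq_or_ne x 0 with rfl | hx
    · simp
    · have hn : ‖x‖ ≠ 0 := norm_ne_zero_iff.mpr hx
      have := hb' ((‖x‖:ℂ)⁻¹ • x) (by
        rw [norm_smul]
        simp [inv_mul_cancel₀ hn])
      rw [map_smul, norm_smul] at this
      simp only [norm_inv, Complex.norm_real, norm_norm] at this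
      have hpos : (0:ℝ) < ‖x‖ := (norm_nonneg x).lt_of_ne' hn
      calc ε * ‖x‖ ≤ (‖x‖⁻¹ * ‖T x‖) * ‖x‖ := by nlinarith
        _ = ‖T x‖ := by field_simp
  have hanti : AntilipschitzWith (⟨ε, hε.le⟩ : ℝ≥0)⁻¹ T := by
    apply ContinuousLinearMap.antilipschitz_of_bound
    intro x
    change ‖x‖ ≤ ε⁻¹ * ‖T x‖
    rw [inv_mul_eq_div, le_div_iff₀ hε, mul_comm]
    exact hb x
  have hbij : Function.Bijective T := by
    rw [ContinuousLinearMap.bijective_iff_dense_range_and_antilipschitz]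
    refine ⟨?_, ⟨_, hanti⟩⟩
    rw [Submodule.topologicalClosure_eq_top_iff, Submodule.eq_bot_iff]
    intro y hy
    have h0 : ∀ x : H, ⟪T x, y⟫_ℂ = 0 := fun x =>
      (Submodule.mem_orthogonal _ _).mp hy (T x) (LinearMap.mem_range_self _ x)
    have hTy : ⟪T y, T y⟫_ℂ = 0 := by
      calc ⟪T y, T y⟫_ℂ = ⟪T (T y), y⟫_ℂ := by
            have hl := ContinuousLinearMap.adjoint_inner_left T y (T y)
            rw [hT.adjoint_eq] at hl
            exact hl.symm
        _ = 0 := h0 (T y)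
    have hTy0 : T y = 0 := inner_self_eq_zero.mp hTy
    have := hb y
    rw [hTy0] at this
    simp only [norm_zero] at this
    have : ‖y‖ ≤ 0 := by nlinarith
    exact norm_le_zero_iff.mp this
  apply hnu
  have hker : T.ker = ⊥ := LinearMap.ker_eq_bot_of_injective hbij.1
  have hrange : T.range = ⊤ := LinearMap.range_eq_top.mpr hbij.2
  let e : H ≃L[ℂ] H := ContinuousLinearEquiv.ofBijective T hker hrange
  refine ⟨⟨T, (e.symm : H →L[ℂ] H), ?_, ?_⟩, rfl⟩
  · ext x
    exact e.apply_symm_apply x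
  · ext x
    exact e.symm_apply_apply x


lemma single_vec {H : Type*} [NormedAddCommGroup H] [InnerProductSpace ℂ H] [CompleteSpace H]
    (P Q U a : H →L[ℂ] H) (c : ℂ) (v : H)
    (hv : ‖v‖ = 1)
    (hUl : star U * U = 1) (hUr : U * star U = 1)
    (hPQ : U * P * star U = Q)
    (hPn : ‖P‖ ≤ 1)
    (hUa : ‖U - a‖ ≤ 1/100)
    (hPv : ‖P v - v‖ ≤ 1/100)
    (hQv : ‖Q v‖ ≤ 1/100)
    (hav : ‖a v - c • v‖ ≤ 1/100)
    (hasv : ‖(star a) v - (starRingEnd ℂ c) • v‖ ≤ 1/100) : False := by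
  have hUn : ‖U‖ ≤ 1 := by
    have h1 : ‖star U * U‖ = ‖U‖ * ‖U‖ := CStarRing.norm_star_mul_self
    rw [hUl] at h1
    have h2 : ‖(1 : H →L[ℂ] H)‖ ≤ 1 := ContinuousLinearMap.norm_id_le
    nlinarith [norm_nonneg U]
  have hcn : ‖c‖ ≤ 2 := by
    have h1 : ‖c • v‖ ≤ ‖a v‖ + (1/100:ℝ) := by
      have := norm_sub_norm_le (a v) (c • v)
      have h2 : ‖a v - c • v‖ ≤ (1/100:ℝ) := hav
      linarith [abs_le.mp (abs_norm_sub_norm_le (a v) (c • v))]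
    have h2 : ‖a v‖ ≤ ‖a‖ * ‖v‖ := a.le_opNorm v
    have h3 : ‖a‖ ≤ ‖U‖ + (1/100:ℝ) := by
      have := norm_sub_norm_le U a
      have : ‖a‖ - ‖U‖ ≤ ‖U - a‖ := by
        have := norm_sub_rev U a
        linarith [abs_le.mp (abs_norm_sub_norm_le a U), norm_sub_rev a U ▸ hUa]
      linarith
    rw [norm_smul, hv, mul_one] at h1
    rw [hv, mul_one] at h2
    linarith
  have hUsn : ‖star U - star a‖ ≤ (1/100:ℝ) := by
    rw [← star_sub, norm_star]; exact hUa
  have hUv : ‖U v - c • v‖ ≤ 2 * (1/100:ℝ) := by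
    have h1 : ‖U v - a v‖ ≤ (1/100:ℝ) := by
      have := (U - a).le_opNorm v
      simp only [ContinuousLinearMap.sub_apply] at this
      rw [hv, mul_one] at this
      linarith
    calc ‖U v - c • v‖ ≤ ‖U v - a v‖ + ‖a v - c • v‖ := norm_sub_le_norm_sub_add_norm_sub _ _ _
      _ ≤ 2 * (1/100:ℝ) := by linarith
  have hUsv : ‖(star U) v - (starRingEnd ℂ c) • v‖ ≤ 2 * (1/100:ℝ) := by
    have h1 : ‖(star U) v - (star a) v‖ ≤ (1/100:ℝ) := by
      have := (star U - star a).le_opNorm v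
      simp only [ContinuousLinearMap.sub_apply] at this
      rw [hv, mul_one] at this
      linarith
    calc ‖(star U) v - (starRingEnd ℂ c) • v‖
        ≤ ‖(star U) v - (star a) v‖ + ‖(star a) v - (starRingEnd ℂ c) • v‖ :=
          norm_sub_le_norm_sub_add_norm_sub _ _ _
      _ ≤ 2 * (1/100:ℝ) := by linarith
  -- P (star U v) close to conj c • v
  have e1 : ‖P ((star U) v) - (starRingEnd ℂ c) • v‖ ≤ 4 * (1/100:ℝ) := by
    have h1 : ‖P ((star U) v) - P ((starRingEnd ℂ c) • v)‖ ≤ 2 * (1/100:ℝ) := by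
      rw [← map_sub]
      calc ‖P ((star U) v - (starRingEnd ℂ c) • v)‖
          ≤ ‖P‖ * ‖(star U) v - (starRingEnd ℂ c) • v‖ := P.le_opNorm _
        _ ≤ 1 * (2 * (1/100:ℝ)) := by
            apply mul_le_mul hPn hUsv (norm_nonneg _) zero_le_one
        _ = 2 * (1/100:ℝ) := one_mul _
    have h2 : ‖P ((starRingEnd ℂ c) • v) - (starRingEnd ℂ c) • v‖ ≤ 2 * (1/100:ℝ) := by
      rw [map_smul, ← smul_sub, norm_smul, RCLike.norm_conj]
      nlinarith [norm_nonneg (P v - v), norm_nonneg c]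
    calc ‖P ((star U) v) - (starRingEnd ℂ c) • v‖
        ≤ ‖P ((star U) v) - P ((starRingEnd ℂ c) • v)‖
          + ‖P ((starRingEnd ℂ c) • v) - (starRingEnd ℂ c) • v‖ :=
          norm_sub_le_norm_sub_add_norm_sub _ _ _
      _ ≤ 4 * (1/100:ℝ) := by linarith
  -- U (P (star U v)) close to (c * conj c) • v
  have e2 : ‖U (P ((star U) v)) - (c * starRingEnd ℂ c) • v‖ ≤ 8 * (1/100:ℝ) := by
    have h1 : ‖U (P ((star U) v)) - U ((starRingEnd ℂ c) • v)‖ ≤ 4 * (1/100:ℝ) := by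
      rw [← map_sub]
      calc ‖U (P ((star U) v) - (starRingEnd ℂ c) • v)‖
          ≤ ‖U‖ * ‖P ((star U) v) - (starRingEnd ℂ c) • v‖ := U.le_opNorm _
        _ ≤ 1 * (4 * (1/100:ℝ)) := mul_le_mul hUn e1 (norm_nonneg _) zero_le_one
        _ = 4 * (1/100:ℝ) := one_mul _
    have h2 : ‖U ((starRingEnd ℂ c) • v) - (c * starRingEnd ℂ c) • v‖ ≤ 4 * (1/100:ℝ) := by
      rw [map_smul]
      have : (c * starRingEnd ℂ c) • v = (starRingEnd ℂ c) • (c • v) := by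
        rw [smul_smul, mul_comm]
      rw [this, ← smul_sub, norm_smul, RCLike.norm_conj]
      nlinarith [norm_nonneg (U v - c • v), norm_nonneg c]
    calc ‖U (P ((star U) v)) - (c * starRingEnd ℂ c) • v‖
        ≤ ‖U (P ((star U) v)) - U ((starRingEnd ℂ c) • v)‖
          + ‖U ((starRingEnd ℂ c) • v) - (c * starRingEnd ℂ c) • v‖ :=
          norm_sub_le_norm_sub_add_norm_sub _ _ _
      _ ≤ 8 * (1/100:ℝ) := by linarith
  have hQv2 : Q v = U (P ((star U) v)) := by
    rw [← hPQ]; rfl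
  have hcc_small : ‖c * starRingEnd ℂ c‖ ≤ 9 * (1/100:ℝ) := by
    have h1 : ‖(c * starRingEnd ℂ c) • v‖ ≤ ‖Q v‖ + 8 * (1/100:ℝ) := by
      have := norm_sub_le_norm_sub_add_norm_sub ((c * starRingEnd ℂ c) • v) (Q v) 0
      have h2 := e2
      rw [← hQv2] at h2
      rw [norm_sub_rev] at h2
      calc ‖(c * starRingEnd ℂ c) • v‖ = ‖(c * starRingEnd ℂ c) • v - Q v + Q v‖ := by
            rw [sub_add_cancel]
        _ ≤ ‖(c * starRingEnd ℂ c) • v - Q v‖ + ‖Q v‖ := norm_add_le _ _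
        _ ≤ ‖Q v‖ + 8 * (1/100:ℝ) := by rw [norm_sub_rev] at h2 ⊢; linarith
    rw [norm_smul, hv, mul_one] at h1
    linarith
  -- v = U (star U v) close to (c conj c) v
  have e3 : ‖v - (c * starRingEnd ℂ c) • v‖ ≤ 6 * (1/100:ℝ) := by
    have hvv : U ((star U) v) = v := by
      have : (U * star U) v = v := by rw [hUr]; rfl
      exact this
    have h1 : ‖U ((star U) v) - U ((starRingEnd ℂ c) • v)‖ ≤ 2 * (1/100:ℝ) := by
      rw [← map_sub]
      calc ‖U ((star U) v - (starRingEnd ℂ c) • v)‖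
          ≤ ‖U‖ * ‖(star U) v - (starRingEnd ℂ c) • v‖ := U.le_opNorm _
        _ ≤ 1 * (2 * (1/100:ℝ)) := mul_le_mul hUn hUsv (norm_nonneg _) zero_le_one
        _ = 2 * (1/100:ℝ) := one_mul _
    have h2 : ‖U ((starRingEnd ℂ c) • v) - (c * starRingEnd ℂ c) • v‖ ≤ 4 * (1/100:ℝ) := by
      rw [map_smul]
      have : (c * starRingEnd ℂ c) • v = (starRingEnd ℂ c) • (c • v) := by
        rw [smul_smul, mul_comm]
      rw [this, ← smul_sub, norm_smul, RCLike.norm_conj]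
      nlinarith [norm_nonneg (U v - c • v), norm_nonneg c]
    have e3' : ‖U ((star U) v) - (c * starRingEnd ℂ c) • v‖ ≤ 6 * (1/100:ℝ) :=
      calc ‖U ((star U) v) - (c * starRingEnd ℂ c) • v‖
          ≤ ‖U ((star U) v) - U ((starRingEnd ℂ c) • v)‖
            + ‖U ((starRingEnd ℂ c) • v) - (c * starRingEnd ℂ c) • v‖ :=
            norm_sub_le_norm_sub_add_norm_sub _ _ _
        _ ≤ 6 * (1/100:ℝ) := by linarith
    rw [hvv] at e3'
    exact e3'
  have e4 : ‖v - (c * starRingEnd ℂ c) • v‖ ≥ 1 - 9 * (1/100:ℝ) := by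
    have : v - (c * starRingEnd ℂ c) • v = (1 - c * starRingEnd ℂ c) • v := by
      rw [sub_smul, one_smul]
    rw [this, norm_smul, hv, mul_one]
    calc (1:ℝ) - 9 * (1/100:ℝ) ≤ ‖(1:ℂ)‖ - ‖c * starRingEnd ℂ c‖ := by
          simp only [norm_one]; linarith
      _ ≤ ‖(1:ℂ) - c * starRingEnd ℂ c‖ := norm_sub_norm_le _ _
  linarith


open StarAlgebra in
lemma cfc_complex_mem_elemental {A : Type*} [CStarAlgebra A] (a : A) (f : ℂ → ℂ) :
    cfc f a ∈ elemental ℂ a := by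
  by_cases ha : IsStarNormal a
  · by_cases hf : ContinuousOn f (spectrum ℂ a)
    · rw [cfc_apply f a ha hf, cfcHom_eq_of_isStarNormal]
      exact Subtype.mem _
    · rw [cfc_apply_of_not_continuousOn a hf]
      exact zero_mem _
  · rw [cfc_apply_of_not_predicate a ha]
    exact zero_mem _

open StarAlgebra in
lemma cfc_real_mem_elemental {A : Type*} [CStarAlgebra A] (a : A) (hsa : IsSelfAdjoint a)
    (f : ℝ → ℝ) : cfc f a ∈ elemental ℂ a := by
  rw [cfc_real_eq_complex f hsa]
  exact cfc_complex_mem_elemental a _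

lemma commute_of_mem_elemental {A : Type*} [CStarAlgebra A] {a b w : A} (hbs : star b = b)
    (hba : b * a = a * b) (hw : w ∈ StarAlgebra.elemental ℂ a) : b * w = w * b := by
  induction hw using StarAlgebra.elemental.induction_on with
  | self => exact hba
  | star_self =>
      have := congrArg star hba
      rw [star_mul, star_mul, hbs] at this
      rw [← this]
  | algebraMap r => rw [Algebra.commutes]
  | add u hu v hv hu' hv' => rw [mul_add, add_mul, hu', hv']
  | mul u hu v hv hu' hv' => rw [← mul_assoc, hu', mul_assoc, hv', mul_assoc]
  | closure s hs hmem v hv =>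
      have hclosed : IsClosed {y : A | b * y = y * b} := by
        apply isClosed_eq
        · exact continuous_const.mul continuous_id
        · exact continuous_id.mul continuous_const
      exact closure_minimal (fun u hu => hmem u hu) hclosed hv

lemma backward {H : Type*} [NormedAddCommGroup H] [InnerProductSpace ℂ H] [CompleteSpace H]
    (P Q : H →L[ℂ] H) (hP : P ^ 2 = P) (hPs : star P = P) (hQ : Q ^ 2 = Q) (hQs : star Q = Q)
    (h : IsUnit (P + Q - 1)) :
    ∃ U : H →L[ℂ] H, U ∈ unitary (H →L[ℂ] H) ∧
        U ∈ (StarAlgebra.adjoin ℂ ({P, Q} : Set (H →L[ℂ] H))).topologicalClosure ∧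
        U * P * star U = Q ∧ U * Q * star U = P := by
  set T : H →L[ℂ] H := P + Q - 1 with hT
  have hTs : IsSelfAdjoint T := by
    rw [IsSelfAdjoint, hT, star_sub, star_add, hPs, hQs, star_one]
  have hT2s : IsSelfAdjoint (T ^ 2) := hTs.pow 2
  have hTP : T * P = Q * T := by
    have h1 : T * P - Q * T = P ^ 2 - P - (Q ^ 2 - Q) := by rw [hT]; noncomm_ring
    rw [hP, hQ, sub_self, sub_self, sub_zero] at h1
    rwa [sub_eq_zero] at h1
  have hTQ : T * Q = P * T := by
    have h1 : T * Q - P * T = Q ^ 2 - Q - (P ^ 2 - P) := by rw [hT]; noncomm_ring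
    rw [hP, hQ, sub_self, sub_self, sub_zero] at h1
    rwa [sub_eq_zero] at h1
  have hT2P : P * T ^ 2 = T ^ 2 * P := by
    calc P * T ^ 2 = (P * T) * T := by rw [sq, mul_assoc]
      _ = (T * Q) * T := by rw [hTQ]
      _ = T * (Q * T) := by rw [mul_assoc]
      _ = T * (T * P) := by rw [hTP]
      _ = T ^ 2 * P := by rw [sq, mul_assoc]
  have hT2Q : Q * T ^ 2 = T ^ 2 * Q := by
    calc Q * T ^ 2 = (Q * T) * T := by rw [sq, mul_assoc]
      _ = (T * P) * T := by rw [hTP]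
      _ = T * (P * T) := by rw [mul_assoc]
      _ = T * (T * Q) := by rw [hTQ]
      _ = T ^ 2 * Q := by rw [sq, mul_assoc]
  have hT2pos : (0 : H →L[ℂ] H) ≤ T ^ 2 := by
    rw [sq]
    nth_rewrite 1 [← hTs.star_eq]
    exact star_mul_self_nonneg T
  have hT2unit : IsUnit (T ^ 2) := h.pow 2
  have hspec : ∀ x ∈ spectrum ℝ (T ^ 2), 0 < x := by
    intro x hx
    have hnn : 0 ≤ x := spectrum_nonneg_of_nonneg hT2pos hx
    rcases hnn.lt_or_eq with hlt | heq
    · exact hlt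
    · exfalso
      rw [← heq] at hx
      exact spectrum.not_isUnit_of_zero_mem _ hx hT2unit
  set f : ℝ → ℝ := fun x => (Real.sqrt x)⁻¹ with hf
  have hfc : ContinuousOn f (spectrum ℝ (T ^ 2)) := by
    apply ContinuousOn.inv₀ Real.continuous_sqrt.continuousOn
    intro x hx
    exact (Real.sqrt_ne_zero'.mpr (hspec x hx))
  obtain ⟨W, hW⟩ : ∃ w : H →L[ℂ] H, w = cfc f (T ^ 2) := ⟨_, rfl⟩
  have hWs : IsSelfAdjoint W := hW ▸ cfc_predicate f (T ^ 2)
  have hWsq : T ^ 2 * (W * W) = 1 := by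
    have h1 : W * W = cfc (fun x => f x * f x) (T ^ 2) := by
      rw [hW, ← cfc_mul f f _ hfc hfc]
    have h2 : T ^ 2 = cfc (fun x : ℝ => x) (T ^ 2) := (cfc_id' ℝ (T ^ 2) hT2s).symm
    rw [h1]
    nth_rewrite 1 [h2]
    rw [← cfc_mul (fun x : ℝ => x) (fun x => f x * f x) (T ^ 2) (by fun_prop) (hfc.mul hfc)]
    have heq : (spectrum ℝ (T ^ 2)).EqOn (fun x => x * (f x * f x)) 1 := by
      intro x hx
      have hx0 : 0 < x := hspec x hx
      simp only [hf, Pi.one_apply]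
      rw [← mul_inv, Real.mul_self_sqrt hx0.le]
      exact mul_inv_cancel₀ hx0.ne'
    rw [cfc_congr heq, cfc_one ℝ _ hT2s]
  have hWmem' : W ∈ StarAlgebra.elemental ℂ (T ^ 2) := hW ▸ cfc_real_mem_elemental _ hT2s f
  have hcomm : ∀ b : H →L[ℂ] H, star b = b → b * T ^ 2 = T ^ 2 * b → b * W = W * b :=
    fun b hbs hbT => commute_of_mem_elemental hbs hbT hWmem'
  have hPW : P * W = W * P := hcomm P hPs hT2P
  have hQW : Q * W = W * Q := hcomm Q hQs hT2Q
  have hTW : T * W = W * T := by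
    apply hcomm T hTs.star_eq
    rw [sq, mul_assoc]
  obtain ⟨U, hU⟩ : ∃ u : H →L[ℂ] H, u = T * W := ⟨_, rfl⟩
  have hUs : star U = U := by
    rw [hU, star_mul, hWs.star_eq, hTs.star_eq, hTW]
  have hUU : U * U = 1 := by
    rw [hU]
    calc T * W * (T * W) = T * (W * T) * W := by noncomm_ring
      _ = T * (T * W) * W := by rw [← hTW]
      _ = T ^ 2 * (W * W) := by noncomm_ring
      _ = 1 := hWsq
  refine ⟨U, ?_, ?_, ?_, ?_⟩
  · rw [Unitary.mem_iff, hUs, hUU]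
    exact ⟨rfl, rfl⟩
  · -- membership
    have hTmem : T ∈ StarAlgebra.adjoin ℂ ({P, Q} : Set (H →L[ℂ] H)) := by
      rw [hT]
      exact sub_mem (add_mem (StarAlgebra.subset_adjoin ℂ _ (by simp))
        (StarAlgebra.subset_adjoin ℂ _ (by simp))) (one_mem _)
    have hTmem' : T ∈ (StarAlgebra.adjoin ℂ ({P, Q} : Set (H →L[ℂ] H))).topologicalClosure :=
      (StarSubalgebra.le_topologicalClosure _) hTmem
    have hT2mem : T ^ 2 ∈ (StarAlgebra.adjoin ℂ ({P, Q} : Set (H →L[ℂ] H))).topologicalClosure :=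
      pow_mem hTmem' 2
    have hWmem : W ∈ (StarAlgebra.adjoin ℂ ({P, Q} : Set (H →L[ℂ] H))).topologicalClosure := by
      have hle : StarAlgebra.elemental ℂ (T ^ 2) ≤
          (StarAlgebra.adjoin ℂ ({P, Q} : Set (H →L[ℂ] H))).topologicalClosure :=
        StarAlgebra.elemental.le_of_mem (StarSubalgebra.isClosed_topologicalClosure _) hT2mem
      exact hle hWmem'
    rw [hU]
    exact mul_mem hTmem' hWmem
  · rw [hUs]
    calc U * P * U = (T * (W * P)) * U := by rw [hU]; noncomm_ring
      _ = (T * (P * W)) * U := by rw [hPW]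
      _ = ((T * P) * W) * U := by noncomm_ring
      _ = ((Q * T) * W) * U := by rw [hTP]
      _ = Q * (U * U) := by rw [hU]; noncomm_ring
      _ = Q := by rw [hUU, mul_one]
  · rw [hUs]
    calc U * Q * U = (T * (W * Q)) * U := by rw [hU]; noncomm_ring
      _ = (T * (Q * W)) * U := by rw [hQW]
      _ = ((T * Q) * W) * U := by noncomm_ring
      _ = ((P * T) * W) * U := by rw [hTQ]
      _ = P * (U * U) := by rw [hU]; noncomm_ring
      _ = P := by rw [hUU, mul_one]


section
variable {H : Type*} [NormedAddCommGroup H] [InnerProductSpace ℂ H] [CompleteSpace H]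

lemma proj_inner (R : H →L[ℂ] H) (hR : R ^ 2 = R) (hRs : star R = R) (v : H) :
    ⟪v, R v⟫_ℂ = (‖R v‖ : ℂ) ^ 2 := by
  have hadj : ContinuousLinearMap.adjoint R = R :=
    ContinuousLinearMap.isSelfAdjoint_iff'.mp hRs
  have hR2 : R v = R (R v) := by
    conv_lhs => rw [← hR]
    rw [sq]
    rfl
  calc ⟪v, R v⟫_ℂ = ⟪v, R (R v)⟫_ℂ := by rw [← hR2]
    _ = ⟪v, ContinuousLinearMap.adjoint R (R v)⟫_ℂ := by rw [hadj]
    _ = ⟪R v, R v⟫_ℂ := ContinuousLinearMap.adjoint_inner_right R v (R v)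
    _ = (‖R v‖ : ℂ) ^ 2 := inner_self_eq_norm_sq_to_K (R v)

lemma proj_est (P Q : H →L[ℂ] H) (hP : P ^ 2 = P) (hPs : star P = P)
    (hQ : Q ^ 2 = Q) (hQs : star Q = Q) (v : H) (hv : ‖v‖ = 1) :
    ‖P v - v‖ ^ 2 + ‖Q v‖ ^ 2 ≤ ‖(P - Q) v - v‖ := by
  have hR : (1 - P) ^ 2 = 1 - P := by
    have : (1 - P) ^ 2 = (1 - P) + (P ^ 2 - P) := by noncomm_ring
    rw [hP, sub_self, add_zero] at this
    exact this
  have hRs : star (1 - P) = 1 - P := by rw [star_sub, star_one, hPs]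
  have h1 : ⟪v, (1 - P) v⟫_ℂ = (‖(1 - P) v‖ : ℂ) ^ 2 := proj_inner _ hR hRs v
  have h2 : ⟪v, Q v⟫_ℂ = (‖Q v‖ : ℂ) ^ 2 := proj_inner _ hQ hQs v
  have h3 : ⟪v, (1 - P) v⟫_ℂ + ⟪v, Q v⟫_ℂ = ⟪v, ((1 - P) + Q) v⟫_ℂ := by
    rw [ContinuousLinearMap.add_apply, inner_add_right]
  have h4 : ((1 - P) + Q) v = v - ((P - Q) v - v) - v := by
    simp only [ContinuousLinearMap.sub_apply, ContinuousLinearMap.add_apply,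
      ContinuousLinearMap.one_apply]
    abel
  have h5 : (‖(1 - P) v‖ : ℂ) ^ 2 + (‖Q v‖ : ℂ) ^ 2 = ⟪v, ((1 - P) + Q) v⟫_ℂ := by
    rw [← h1, ← h2, h3]
  have h6 : ‖(1 - P) v‖ ^ 2 + ‖Q v‖ ^ 2 = (⟪v, ((1 - P) + Q) v⟫_ℂ).re := by
    have := congrArg Complex.re h5
    simpa [← Complex.ofReal_pow] using this
  have h7 : (⟪v, ((1 - P) + Q) v⟫_ℂ).re ≤ ‖(P - Q) v - v‖ := by
    calc (⟪v, ((1 - P) + Q) v⟫_ℂ).re ≤ ‖⟪v, ((1 - P) + Q) v⟫_ℂ‖ := Complex.re_le_norm _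
      _ ≤ ‖v‖ * ‖((1 - P) + Q) v‖ := norm_inner_le_norm v _
      _ = ‖((1 - P) + Q) v‖ := by rw [hv, one_mul]
      _ = ‖(P - Q) v - v‖ := by
          rw [h4]
          simp only [sub_sub_cancel_left]
          rw [norm_neg]
  have h8 : ‖(1 - P) v‖ = ‖P v - v‖ := by
    have : (1 - P) v = -(P v - v) := by
      simp only [ContinuousLinearMap.sub_apply, ContinuousLinearMap.one_apply]
      abel
    rw [this, norm_neg]
  rw [← h8]
  rw [h6]
  exact h7

lemma normsq_add (S T : H →L[ℂ] H) (hSs : star S = S) (hTs : star T = T)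
    (hsum : S ^ 2 + T ^ 2 = 1) (y : H) : ‖S y‖ ^ 2 + ‖T y‖ ^ 2 = ‖y‖ ^ 2 := by
  have hSadj : ContinuousLinearMap.adjoint S = S := ContinuousLinearMap.isSelfAdjoint_iff'.mp hSs
  have hTadj : ContinuousLinearMap.adjoint T = T := ContinuousLinearMap.isSelfAdjoint_iff'.mp hTs
  have hS : ⟪S y, S y⟫_ℂ = ⟪y, S (S y)⟫_ℂ := by
    have h := ContinuousLinearMap.adjoint_inner_left S (S y) y
    rw [hSadj] at h
    exact h
  have hT : ⟪T y, T y⟫_ℂ = ⟪y, T (T y)⟫_ℂ := by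
    have h := ContinuousLinearMap.adjoint_inner_left T (T y) y
    rw [hTadj] at h
    exact h
  have hsum' : S (S y) + T (T y) = y := by
    have h1 : (S ^ 2 + T ^ 2) y = y := by rw [hsum]; rfl
    have h2 : (S ^ 2 + T ^ 2) y = S (S y) + T (T y) := by
      simp only [ContinuousLinearMap.add_apply, sq, ContinuousLinearMap.mul_apply]
    rw [← h2, h1]
  have hfin : ⟪S y, S y⟫_ℂ + ⟪T y, T y⟫_ℂ = ⟪y, y⟫_ℂ := by
    rw [hS, hT, ← inner_add_right, hsum']
  rw [inner_self_eq_norm_sq_to_K, inner_self_eq_norm_sq_to_K, inner_self_eq_norm_sq_to_K] at hfin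
  exact_mod_cast hfin
end


section
variable {H : Type*} [NormedAddCommGroup H] [InnerProductSpace ℂ H] [CompleteSpace H]

lemma proj_norm_le_one (P : H →L[ℂ] H) (hP : P ^ 2 = P) (hPs : star P = P) : ‖P‖ ≤ 1 := by
  have h1 : ‖star P * P‖ = ‖P‖ * ‖P‖ := CStarRing.norm_star_mul_self
  rw [hPs, ← sq, hP] at h1
  nlinarith [norm_nonneg P]



lemma core {ι : Type} (P Q : H →L[ℂ] H) (hP : P ^ 2 = P) (hPs : star P = P)
    (hQ : Q ^ 2 = Q) (hQs : star Q = Q)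
    (U : H →L[ℂ] H) (hUl : star U * U = 1) (hUr : U * star U = 1)
    (hUmem : U ∈ (StarAlgebra.adjoin ℂ ({P, Q} : Set (H →L[ℂ] H))).topologicalClosure)
    (hPQ : U * P * star U = Q)
    (l : Filter ι) [l.NeBot] (x : ι → H)
    (hx : ∀ᶠ i in l, ‖x i‖ = 1)
    (hPx : Tendsto (fun i => ‖P (x i) - x i‖) l (𝓝 0))
    (hQx : Tendsto (fun i => ‖Q (x i)‖) l (𝓝 0)) : False := by
  have mulkey : ∀ (u w : H →L[ℂ] H) (c d : ℂ),
      Tendsto (fun i => ‖u (x i) - c • x i‖) l (𝓝 0) →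
      Tendsto (fun i => ‖w (x i) - d • x i‖) l (𝓝 0) →
      Tendsto (fun i => ‖(u * w) (x i) - (c * d) • x i‖) l (𝓝 0) := by
    intro u w c d hu hw
    have hbound : ∀ i, ‖(u * w) (x i) - (c * d) • x i‖ ≤
        ‖u‖ * ‖w (x i) - d • x i‖ + ‖d‖ * ‖u (x i) - c • x i‖ := by
      intro i
      have hsplit : (u * w) (x i) - (c * d) • x i
          = u (w (x i) - d • x i) + d • (u (x i) - c • x i) := by
        simp only [ContinuousLinearMap.mul_apply, map_sub, map_smul, smul_sub]
        rw [smul_smul, mul_comm d c]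
        abel
      rw [hsplit]
      calc ‖u (w (x i) - d • x i) + d • (u (x i) - c • x i)‖
          ≤ ‖u (w (x i) - d • x i)‖ + ‖d • (u (x i) - c • x i)‖ := norm_add_le _ _
        _ ≤ ‖u‖ * ‖w (x i) - d • x i‖ + ‖d‖ * ‖u (x i) - c • x i‖ := by
            gcongr
            · exact u.le_opNorm _
            · rw [norm_smul]
    have hlim : Tendsto (fun i => ‖u‖ * ‖w (x i) - d • x i‖ + ‖d‖ * ‖u (x i) - c • x i‖)
        l (𝓝 0) := by
      have h1 := hw.const_mul ‖u‖
      have h2 := hu.const_mul ‖d‖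
      simpa using h1.add h2
    exact squeeze_zero (fun i => norm_nonneg _) hbound hlim
  have key : ∀ b ∈ StarAlgebra.adjoin ℂ ({P, Q} : Set (H →L[ℂ] H)), ∃ c : ℂ,
      Tendsto (fun i => ‖b (x i) - c • x i‖) l (𝓝 0) ∧
      Tendsto (fun i => ‖(star b) (x i) - (starRingEnd ℂ c) • x i‖) l (𝓝 0) := by
    intro b hb
    induction hb using StarAlgebra.adjoin_induction with
    | mem z hz =>
        rcases hz with rfl | hz
        · refine ⟨1, ?_, ?_⟩
          · simpa using hPx
          · rw [hPs]
            simpa using hPx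
        · rw [Set.mem_singleton_iff] at hz
          subst hz
          refine ⟨0, ?_, ?_⟩
          · simpa using hQx
          · rw [hQs]
            simpa using hQx
    | algebraMap r =>
        refine ⟨r, ?_, ?_⟩
        · have : ∀ i, (algebraMap ℂ (H →L[ℂ] H) r) (x i) - r • x i = 0 := by
            intro i
            simp [Algebra.algebraMap_eq_smul_one]
          simpa [this] using tendsto_const_nhds
        · have : ∀ i, (star (algebraMap ℂ (H →L[ℂ] H) r)) (x i)
              - (starRingEnd ℂ r) • x i = 0 := by
            intro i
            simp [Algebra.algebraMap_eq_smul_one, star_smul]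
          simpa [this] using tendsto_const_nhds
    | add u w hu hw ihu ihw =>
        obtain ⟨c, hc1, hc2⟩ := ihu
        obtain ⟨d, hd1, hd2⟩ := ihw
        refine ⟨c + d, ?_, ?_⟩
        · have hbound : ∀ i, ‖(u + w) (x i) - (c + d) • x i‖ ≤
              ‖u (x i) - c • x i‖ + ‖w (x i) - d • x i‖ := by
            intro i
            have : (u + w) (x i) - (c + d) • x i
                = (u (x i) - c • x i) + (w (x i) - d • x i) := by
              simp only [ContinuousLinearMap.add_apply, add_smul]
              abel
            rw [this]
            exact norm_add_le _ _
          exact squeeze_zero (fun i => norm_nonneg _) hbound (by simpa using hc1.add hd1)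
        · have hbound : ∀ i, ‖(star (u + w)) (x i) - (starRingEnd ℂ (c + d)) • x i‖ ≤
              ‖(star u) (x i) - (starRingEnd ℂ c) • x i‖
                + ‖(star w) (x i) - (starRingEnd ℂ d) • x i‖ := by
            intro i
            have : (star (u + w)) (x i) - (starRingEnd ℂ (c + d)) • x i
                = ((star u) (x i) - (starRingEnd ℂ c) • x i)
                  + ((star w) (x i) - (starRingEnd ℂ d) • x i) := by
              simp only [star_add, ContinuousLinearMap.add_apply, map_add, add_smul]
              abel
            rw [this]
            exact norm_add_le _ _
          exact squeeze_zero (fun i => norm_nonneg _) hbound (by simpa using hc2.add hd2)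
    | mul u w hu hw ihu ihw =>
        obtain ⟨c, hc1, hc2⟩ := ihu
        obtain ⟨d, hd1, hd2⟩ := ihw
        refine ⟨c * d, mulkey u w c d hc1 hd1, ?_⟩
        have h1 := mulkey (star w) (star u) (starRingEnd ℂ d) (starRingEnd ℂ c) hd2 hc2
        have h2 : star (u * w) = star w * star u := star_mul u w
        have h3 : starRingEnd ℂ (c * d) = starRingEnd ℂ d * starRingEnd ℂ c := by
          rw [map_mul, mul_comm]
        rw [h2, h3]
        exact h1
    | star u hu ihu =>
        obtain ⟨c, hc1, hc2⟩ := ihu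
        refine ⟨starRingEnd ℂ c, hc2, ?_⟩
        rw [star_star]
        simpa [Complex.conj_conj] using hc1
  -- approximate U by an element of the adjoin
  have hUc : U ∈ closure ((StarAlgebra.adjoin ℂ ({P, Q} : Set (H →L[ℂ] H))) :
      Set (H →L[ℂ] H)) := by
    rw [← StarSubalgebra.topologicalClosure_coe]
    exact hUmem
  rw [Metric.mem_closure_iff] at hUc
  obtain ⟨a, ha, hdist⟩ := hUc (1/100) (by norm_num)
  rw [dist_eq_norm] at hdist
  obtain ⟨c, hc1, hc2⟩ := key a ha
  -- pick a single good index
  have hev : ∀ᶠ i in l, ‖x i‖ = 1 ∧ ‖P (x i) - x i‖ ≤ 1/100 ∧ ‖Q (x i)‖ ≤ 1/100 ∧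
      ‖a (x i) - c • x i‖ ≤ 1/100 ∧
      ‖(star a) (x i) - (starRingEnd ℂ c) • x i‖ ≤ 1/100 := by
    have e1 : ∀ᶠ i in l, ‖P (x i) - x i‖ ≤ 1/100 :=
      (hPx.eventually_lt_const (by norm_num : (0:ℝ) < 1/100)).mono fun i hi => hi.le
    have e2 : ∀ᶠ i in l, ‖Q (x i)‖ ≤ 1/100 :=
      (hQx.eventually_lt_const (by norm_num : (0:ℝ) < 1/100)).mono fun i hi => hi.le
    have e3 : ∀ᶠ i in l, ‖a (x i) - c • x i‖ ≤ 1/100 :=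
      (hc1.eventually_lt_const (by norm_num : (0:ℝ) < 1/100)).mono fun i hi => hi.le
    have e4 : ∀ᶠ i in l, ‖(star a) (x i) - (starRingEnd ℂ c) • x i‖ ≤ 1/100 :=
      (hc2.eventually_lt_const (by norm_num : (0:ℝ) < 1/100)).mono fun i hi => hi.le
    filter_upwards [hx, e1, e2, e3, e4] with i h1 h2 h3 h4 h5
    exact ⟨h1, h2, h3, h4, h5⟩
  obtain ⟨i, hi1, hi2, hi3, hi4, hi5⟩ := hev.exists
  exact single_vec P Q U a c (x i) hi1 hUl hUr hPQ (proj_norm_le_one P hP hPs)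
    hdist.le hi2 hi3 hi4 hi5
end


section
variable {H : Type*} [NormedAddCommGroup H] [InnerProductSpace ℂ H] [CompleteSpace H]

lemma case_aux (P Q : H →L[ℂ] H) (hP : P ^ 2 = P) (hPs : star P = P)
    (hQ : Q ^ 2 = Q) (hQs : star Q = Q)
    (U : H →L[ℂ] H) (hUl : star U * U = 1) (hUr : U * star U = 1)
    (hUmem : U ∈ (StarAlgebra.adjoin ℂ ({P, Q} : Set (H →L[ℂ] H))).topologicalClosure)
    (hPQ : U * P * star U = Q)
    (z : ℕ → H)
    (hb : ∀ n : ℕ, ‖(P - Q) (z n) - z n‖ ≤ 3 * (1 / (n + 1)))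
    (hfreq : ∃ᶠ n in Filter.atTop, 1 ≤ ‖z n‖) : False := by
  rw [Filter.frequently_iff_neBot] at hfreq
  haveI : (Filter.atTop ⊓ Filter.principal {n : ℕ | 1 ≤ ‖z n‖}).NeBot := hfreq
  set l := Filter.atTop ⊓ Filter.principal {n : ℕ | 1 ≤ ‖z n‖} with hl
  have hset : ∀ᶠ n in l, 1 ≤ ‖z n‖ := by
    rw [hl]
    exact Filter.eventually_inf_principal.mpr (Filter.Eventually.of_forall fun n h => h)
  set v : ℕ → H := fun n => (‖z n‖ : ℂ)⁻¹ • z n with hv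
  have hx : ∀ᶠ n in l, ‖v n‖ = 1 := by
    filter_upwards [hset] with n hn
    have h0 : ‖z n‖ ≠ 0 := by linarith
    rw [hv]
    simp only [norm_smul, norm_inv, Complex.norm_real, norm_norm]
    exact inv_mul_cancel₀ h0
  have hg : Filter.Tendsto (fun n : ℕ => 3 * (1 / (n + 1) : ℝ)) l (nhds 0) := by
    have h1 := tendsto_one_div_add_atTop_nhds_zero_nat.const_mul (3:ℝ)
    rw [mul_zero] at h1
    exact h1.mono_left inf_le_left
  have hSv : Filter.Tendsto (fun n => ‖(P - Q) (v n) - v n‖) l (nhds 0) := by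
    have hbound : ∀ᶠ n in l, ‖(P - Q) (v n) - v n‖ ≤ 3 * (1 / (n + 1)) := by
      filter_upwards [hset] with n hn
      have h1 : (P - Q) (v n) - v n = (‖z n‖ : ℂ)⁻¹ • ((P - Q) (z n) - z n) := by
        rw [hv]
        simp only [map_smul, smul_sub]
      rw [h1, norm_smul]
      have h2 : ‖((‖z n‖ : ℂ))⁻¹‖ ≤ 1 := by
        rw [norm_inv, Complex.norm_real, norm_norm]
        rw [inv_le_one_iff₀]
        right; linarith
      calc ‖((‖z n‖ : ℂ))⁻¹‖ * ‖(P - Q) (z n) - z n‖ ≤ 1 * (3 * (1 / (n + 1))) := by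
            apply mul_le_mul h2 (hb n) (norm_nonneg _)
            norm_num
        _ = 3 * (1 / (n + 1)) := one_mul _
    exact squeeze_zero' (Filter.Eventually.of_forall fun n => norm_nonneg _) hbound hg
  have hPsq : Filter.Tendsto (fun n => ‖P (v n) - v n‖ ^ 2) l (nhds 0) := by
    apply squeeze_zero' (Filter.Eventually.of_forall fun n => sq_nonneg _) _ hSv
    filter_upwards [hx] with n hn
    have := proj_est P Q hP hPs hQ hQs (v n) hn
    nlinarith [sq_nonneg (‖Q (v n)‖)]
  have hQsq : Filter.Tendsto (fun n => ‖Q (v n)‖ ^ 2) l (nhds 0) := by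
    apply squeeze_zero' (Filter.Eventually.of_forall fun n => sq_nonneg _) _ hSv
    filter_upwards [hx] with n hn
    have := proj_est P Q hP hPs hQ hQs (v n) hn
    nlinarith [sq_nonneg (‖P (v n) - v n‖)]
  have hPx : Filter.Tendsto (fun n => ‖P (v n) - v n‖) l (nhds 0) := by
    have h := hPsq.sqrt
    rw [Real.sqrt_zero] at h
    exact h.congr fun n => Real.sqrt_sq (norm_nonneg _)
  have hQx : Filter.Tendsto (fun n => ‖Q (v n)‖) l (nhds 0) := by
    have h := hQsq.sqrt
    rw [Real.sqrt_zero] at h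
    exact h.congr fun n => Real.sqrt_sq (norm_nonneg _)
  exact core P Q hP hPs hQ hQs U hUl hUr hUmem hPQ l v hx hPx hQx

lemma pre_case (P Q : H →L[ℂ] H) (hP : P ^ 2 = P) (hPs : star P = P)
    (hQ : Q ^ 2 = Q) (hQs : star Q = Q)
    (U : H →L[ℂ] H) (hUl : star U * U = 1) (hUr : U * star U = 1)
    (hUmem : U ∈ (StarAlgebra.adjoin ℂ ({P, Q} : Set (H →L[ℂ] H))).topologicalClosure)
    (hPQ : U * P * star U = Q)
    (xs : ℕ → H)
    (hxs2 : ∀ n : ℕ, ‖(P + Q - 1) ((P + Q - 1) (xs n))‖ ≤ 3 * (1 / (n + 1)))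
    (hfreq : ∃ᶠ n in Filter.atTop, 1 ≤ ‖xs n + (P - Q) (xs n)‖) : False := by
  have hkey : (P - Q) ^ 2 + (P + Q - 1) ^ 2 = 1 := by
    have h3 : (P - Q) ^ 2 + (P + Q - 1) ^ 2
        = 2 * P ^ 2 + 2 * Q ^ 2 - 2 * P - 2 * Q + 1 := by noncomm_ring
    rw [hP, hQ] at h3
    rw [h3]
    noncomm_ring
  have hop : ((P - Q) - 1) * (1 + (P - Q)) = -((P + Q - 1) * (P + Q - 1)) := by
    have h4 : ((P - Q) - 1) * (1 + (P - Q))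
        = ((P - Q) ^ 2 + (P + Q - 1) ^ 2) - 1 - (P + Q - 1) * (P + Q - 1) := by noncomm_ring
    rw [hkey, sub_self, zero_sub] at h4
    exact h4
  apply case_aux P Q hP hPs hQ hQs U hUl hUr hUmem hPQ (fun n => xs n + (P - Q) (xs n)) _ hfreq
  intro n
  have happly : (P - Q) (xs n + (P - Q) (xs n)) - (xs n + (P - Q) (xs n))
      = -((P + Q - 1) ((P + Q - 1) (xs n))) := by
    have h5 := congrArg (fun (A : H →L[ℂ] H) => A (xs n)) hop
    simp only [ContinuousLinearMap.mul_apply, ContinuousLinearMap.sub_apply,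
      ContinuousLinearMap.add_apply, ContinuousLinearMap.one_apply,
      ContinuousLinearMap.neg_apply, map_add, map_sub] at h5 ⊢
    abel_nf at h5 ⊢
    exact h5
  rw [happly, norm_neg]
  exact hxs2 n

lemma forward (P Q : H →L[ℂ] H) (hP : P ^ 2 = P) (hPs : star P = P)
    (hQ : Q ^ 2 = Q) (hQs : star Q = Q)
    (U : H →L[ℂ] H) (hUu : U ∈ unitary (H →L[ℂ] H))
    (hUmem : U ∈ (StarAlgebra.adjoin ℂ ({P, Q} : Set (H →L[ℂ] H))).topologicalClosure)
    (h1 : U * P * star U = Q) (h2 : U * Q * star U = P) :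
    IsUnit (P + Q - 1) := by
  by_contra hnu
  obtain ⟨hUl, hUr⟩ := Unitary.mem_iff.mp hUu
  have hTs : IsSelfAdjoint (P + Q - 1) := by
    rw [IsSelfAdjoint, star_sub, star_add, hPs, hQs, star_one]
  have hxs : ∀ n : ℕ, ∃ v : H, ‖v‖ = 1 ∧ ‖(P + Q - 1) v‖ < 1 / (n + 1) := by
    intro n
    exact approx_ker (P + Q - 1) hTs hnu (1 / (n + 1)) (by positivity)
  choose xs hxs1 hxs2 using hxs
  have hTnorm : ‖(P + Q - 1 : H →L[ℂ] H)‖ ≤ 3 := by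
    calc ‖(P + Q - 1 : H →L[ℂ] H)‖ ≤ ‖P + Q‖ + ‖(1 : H →L[ℂ] H)‖ := norm_sub_le _ _
      _ ≤ ‖P‖ + ‖Q‖ + ‖(1 : H →L[ℂ] H)‖ := by
          have := norm_add_le P Q
          linarith
      _ ≤ 3 := by
          have e1 := proj_norm_le_one P hP hPs
          have e2 := proj_norm_le_one Q hQ hQs
          have e3 : ‖(1 : H →L[ℂ] H)‖ ≤ 1 := ContinuousLinearMap.norm_id_le
          linarith
  have hb : ∀ n : ℕ, ‖(P + Q - 1) ((P + Q - 1) (xs n))‖ ≤ 3 * (1 / (n + 1)) := by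
    intro n
    calc ‖(P + Q - 1) ((P + Q - 1) (xs n))‖
        ≤ ‖(P + Q - 1 : H →L[ℂ] H)‖ * ‖(P + Q - 1) (xs n)‖ :=
          (P + Q - 1).le_opNorm _
      _ ≤ 3 * (1 / (n + 1)) := by
          apply mul_le_mul hTnorm (hxs2 n).le (norm_nonneg _)
          norm_num
  have hmax : ∀ n : ℕ, 1 ≤ ‖xs n + (P - Q) (xs n)‖ ∨ 1 ≤ ‖xs n - (P - Q) (xs n)‖ := by
    intro n
    by_contra hcon
    push_neg at hcon
    obtain ⟨ha, hb'⟩ := hcon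
    have hpar := parallelogram_law_with_norm ℂ (xs n) ((P - Q) (xs n))
    have h5 : ‖xs n‖ = 1 := hxs1 n
    nlinarith [norm_nonneg (xs n + (P - Q) (xs n)), norm_nonneg (xs n - (P - Q) (xs n)),
      norm_nonneg ((P - Q) (xs n))]
  by_cases hfz : ∃ᶠ n in Filter.atTop, 1 ≤ ‖xs n + (P - Q) (xs n)‖
  · exact pre_case P Q hP hPs hQ hQs U hUl hUr hUmem h1 xs hb hfz
  · have hev : ∀ᶠ n in Filter.atTop, ¬ (1 ≤ ‖xs n + (P - Q) (xs n)‖) :=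
      Filter.not_frequently.mp hfz
    have hfw : ∃ᶠ n in Filter.atTop, 1 ≤ ‖xs n + (Q - P) (xs n)‖ := by
      apply Filter.Eventually.frequently
      filter_upwards [hev] with n hn
      have := hmax n
      rcases this with h | h
      · exact absurd h hn
      · have heq : xs n - (P - Q) (xs n) = xs n + (Q - P) (xs n) := by
          simp only [ContinuousLinearMap.sub_apply]
          abel
        rwa [heq] at h
    apply pre_case Q P hQ hQs hP hPs U hUl hUr _ h2 xs _ hfw
    · rwa [Set.pair_comm Q P]
    · intro n
      have heq : (Q + P - 1 : H →L[ℂ] H) = P + Q - 1 := by rw [add_comm]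
      rw [heq]
      exact hb n
end

/-- For orthogonal projections `P, Q` on a complex Hilbert space, there is a unitary `U` in
the C*-algebra generated by `1, P, Q` with `U P U* = Q` and `U Q U* = P` iff `P + Q - 1` is
invertible. -/
theorem stmt_13 {H : Type*} [NormedAddCommGroup H] [InnerProductSpace ℂ H] [CompleteSpace H]
    (P Q : H →L[ℂ] H) (hP : P ^ 2 = P) (hPs : star P = P) (hQ : Q ^ 2 = Q) (hQs : star Q = Q) :
    (∃ U : H →L[ℂ] H, U ∈ unitary (H →L[ℂ] H) ∧
        U ∈ (StarAlgebra.adjoin ℂ ({P, Q} : Set (H →L[ℂ] H))).topologicalClosure ∧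
        U * P * star U = Q ∧ U * Q * star U = P) ↔
      IsUnit (P + Q - 1) := by
  constructor
  · rintro ⟨U, hUu, hUmem, h1, h2⟩
    exact forward P Q hP hPs hQ hQs U hUu hUmem h1 h2
  · intro h
    exact backward P Q hP hPs hQ hQs h
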